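/- Let a ≥ 0, c′ ≥ 0, K₁ ≥ 0, K₂ ≥ 0, λ̂ > λ > 0, and t_k ≥ 0. Let e : ℝ → ℝⁿ be differentiable on [t_k, T] with e(t_k) = 0 and ‖e′(t)‖ ≤ a·‖e(t)‖ + c′·(K₁·exp(−λ̂·t) + K₂·exp(−λ·t)) for all t ∈ [t_k, T]. Then for all t ∈ [t_k, T], writing τ = t − t_k, ‖e(t)‖ ≤ (exp(a·τ) − exp(−λ̂·τ))·(K₁·c′/(a+λ̂))·exp(−λ̂·t_k) + (exp(a·τ) − exp(−λ·τ))·(K₂·c′/(a+λ))·exp(−λ·t_k). -/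

import Mathlib

open Set Real

private lemma hasDerivAt_exp_lin (k tk x : ℝ) :
    HasDerivAt (fun t => Real.exp (k * (t - tk))) (k * Real.exp (k * (x - tk))) x := by
  have h := (((hasDerivAt_id x).sub_const tk).const_mul k).exp
  simpa [mul_comm] using h

private lemma hasDerivAt_exp_neg_lin (k tk x : ℝ) :
    HasDerivAt (fun t => Real.exp (-(k * (t - tk)))) (-k * Real.exp (-(k * (x - tk)))) x := by
  have h := hasDerivAt_exp_lin (-k) tk x
  simpa [neg_mul] using h

/-- Grönwall-type bound for the event-triggering error: if `e(t_k) = 0` and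
`‖e′(t)‖ ≤ a‖e(t)‖ + c′(K₁ e^{-λ̂ t} + K₂ e^{-λ t})` on `[t_k, T]`, then on `[t_k, T]`,
with `τ = t - t_k`,
`‖e(t)‖ ≤ (e^{aτ} - e^{-λ̂τ})(K₁c′/(a+λ̂))e^{-λ̂ t_k} + (e^{aτ} - e^{-λτ})(K₂c′/(a+λ))e^{-λ t_k}`. -/
theorem stmt6 (n : ℕ) (hn : 0 < n) (a c' K₁ K₂ lamhat lam tk T : ℝ)
    (ha : 0 ≤ a) (hc' : 0 ≤ c') (hK₁ : 0 ≤ K₁) (hK₂ : 0 ≤ K₂)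
    (hlam : 0 < lam) (hlamlt : lam < lamhat) (htk : 0 ≤ tk)
    (e e' : ℝ → EuclideanSpace ℝ (Fin n))
    (hderiv : ∀ t ∈ Set.Icc tk T, HasDerivWithinAt e (e' t) (Set.Icc tk T) t)
    (h0 : e tk = 0)
    (hbnd : ∀ t ∈ Set.Icc tk T,
      ‖e' t‖ ≤ a * ‖e t‖ + c' * (K₁ * Real.exp (-(lamhat * t)) + K₂ * Real.exp (-(lam * t)))) :
    ∀ t ∈ Set.Icc tk T,
      ‖e t‖ ≤
        (Real.exp (a * (t - tk)) - Real.exp (-(lamhat * (t - tk)))) *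
          (K₁ * c' / (a + lamhat)) * Real.exp (-(lamhat * tk)) +
        (Real.exp (a * (t - tk)) - Real.exp (-(lam * (t - tk)))) *
          (K₂ * c' / (a + lam)) * Real.exp (-(lam * tk)) := by
  have hlamhat : 0 < lamhat := hlam.trans hlamlt
  have h1 : (0:ℝ) < a + lamhat := by linarith
  have h2 : (0:ℝ) < a + lam := by linarith
  set B : ℝ → ℝ := fun t =>
    (Real.exp (a * (t - tk)) - Real.exp (-(lamhat * (t - tk)))) *
      (K₁ * c' / (a + lamhat)) * Real.exp (-(lamhat * tk)) +
    (Real.exp (a * (t - tk)) - Real.exp (-(lam * (t - tk)))) *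
      (K₂ * c' / (a + lam)) * Real.exp (-(lam * tk)) with hBdef
  set B' : ℝ → ℝ := fun t =>
    (a * Real.exp (a * (t - tk)) + lamhat * Real.exp (-(lamhat * (t - tk)))) *
      (K₁ * c' / (a + lamhat)) * Real.exp (-(lamhat * tk)) +
    (a * Real.exp (a * (t - tk)) + lam * Real.exp (-(lam * (t - tk)))) *
      (K₂ * c' / (a + lam)) * Real.exp (-(lam * tk)) with hB'def
  -- key identity: a * B x + forcing = B' x
  have hkey : ∀ x : ℝ,
      a * B x + c' * (K₁ * Real.exp (-(lamhat * x)) + K₂ * Real.exp (-(lam * x))) = B' x := by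
    intro x
    have e1 : Real.exp (-(lamhat * x)) =
        Real.exp (-(lamhat * (x - tk))) * Real.exp (-(lamhat * tk)) := by
      rw [← Real.exp_add]; ring_nf
    have e2 : Real.exp (-(lam * x)) =
        Real.exp (-(lam * (x - tk))) * Real.exp (-(lam * tk)) := by
      rw [← Real.exp_add]; ring_nf
    simp only [hBdef, hB'def, e1, e2]
    field_simp
    ring
  have hcontB : ∀ r : ℝ, ContinuousOn (fun t => B t + r * Real.exp ((a+1) * (t - tk))) (Icc tk T) := by
    intro r
    apply ContinuousOn.add
    · apply ContinuousOn.add <;>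
        exact (((Real.continuous_exp.comp (by fun_prop)).sub
          (Real.continuous_exp.comp (by fun_prop))).mul continuous_const).mul
          continuous_const |>.continuousOn
    · exact (continuous_const.mul (Real.continuous_exp.comp (by fun_prop))).continuousOn
  have hfC : ContinuousOn e (Icc tk T) := fun t ht => (hderiv t ht).continuousWithinAt
  have hf' : ∀ x ∈ Ico tk T, HasDerivWithinAt e (e' x) (Ici x) x := by
    intro x hx
    exact (hderiv x (Ico_subset_Icc_self hx)).mono_of_mem_nhdsWithin (Icc_mem_nhdsGE_of_mem hx)
  -- the r-perturbed fencing
  have Hr : ∀ r > (0:ℝ), ∀ t ∈ Icc tk T,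
      ‖e t‖ ≤ B t + r * Real.exp ((a+1) * (t - tk)) := by
    intro r hr
    have hBder : ∀ x : ℝ, HasDerivAt (fun t => B t + r * Real.exp ((a+1) * (t - tk)))
        (B' x + r * ((a+1) * Real.exp ((a+1) * (x - tk)))) x := by
      intro x
      have d1 := (((hasDerivAt_exp_lin a tk x).sub (hasDerivAt_exp_neg_lin lamhat tk x)).mul_const
        (K₁ * c' / (a + lamhat))).mul_const (Real.exp (-(lamhat * tk)))
      have d2 := (((hasDerivAt_exp_lin a tk x).sub (hasDerivAt_exp_neg_lin lam tk x)).mul_const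
        (K₂ * c' / (a + lam))).mul_const (Real.exp (-(lam * tk)))
      have d3 := (hasDerivAt_exp_lin (a+1) tk x).const_mul r
      have := (d1.add d2).add d3
      refine this.congr_deriv ?_
      simp only [hB'def]
      ring
    intro t ht
    refine image_norm_le_of_norm_deriv_right_lt_deriv_boundary hfC hf' ?_ hBder ?_ ht
    · have hB0 : B tk = 0 := by simp [hBdef]
      rw [h0, norm_zero, hB0, sub_self, mul_zero, Real.exp_zero, mul_one, zero_add]
      linarith
    · intro x hx hEq
      have hb := hbnd x (Ico_subset_Icc_self hx)
      have hE : 0 < Real.exp ((a+1) * (x - tk)) := Real.exp_pos _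
      calc ‖e' x‖ ≤ a * ‖e x‖ + c' * (K₁ * Real.exp (-(lamhat * x)) + K₂ * Real.exp (-(lam * x))) := hb
        _ = a * (B x + r * Real.exp ((a+1) * (x - tk)))
            + c' * (K₁ * Real.exp (-(lamhat * x)) + K₂ * Real.exp (-(lam * x))) := by rw [← hEq]
        _ = B' x + a * (r * Real.exp ((a+1) * (x - tk))) := by rw [← hkey x]; ring
        _ < B' x + r * ((a+1) * Real.exp ((a+1) * (x - tk))) := by
            have : a * (r * Real.exp ((a+1) * (x - tk))) < r * ((a+1) * Real.exp ((a+1) * (x - tk))) := by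
              nlinarith
            linarith
  intro t ht
  by_contra hcon
  push_neg at hcon
  set E := Real.exp ((a+1) * (t - tk)) with hE
  have hEpos : 0 < E := Real.exp_pos _
  have hgap : 0 < ‖e t‖ - B t := by simp only [hBdef] at hcon ⊢; linarith
  have := Hr ((‖e t‖ - B t) / (2 * E)) (by positivity) t ht
  have h3 : (‖e t‖ - B t) / (2 * E) * E = (‖e t‖ - B t) / 2 := by
    field_simp
  rw [h3] at this
  linarith
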